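/- Let V be an inner product space of dimension 2n, N an inner product space, α: V × V → N symmetric bilinear with α(X,Z) = ⟨X,Z⟩δ for a unit vector δ ∈ N, all X ∈ V and all Z in a nonzero J-invariant subspace L (J an orthogonal complex structure on V). Suppose the curvature tensor R defined by the Gauss equation with c = -1 satisfies R(X,Y)∘J = J∘R(X,Y). Then ⟨α(X,X), δ⟩ = 1 for every unit vector X ∈ L^⊥; i.e., A_δ = I on all of V (using also A_δ = I on L). -/
import Mathlib


open scoped RealInnerProductSpace

/-- The (4,0)-curvature tensor `⟨R(X,Y)Z,W⟩` determined by the Gauss equation in a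
space form of curvature `c`. -/
noncomputable def gaussR {V N : Type*} [NormedAddCommGroup V] [InnerProductSpace ℝ V]
    [NormedAddCommGroup N] [InnerProductSpace ℝ N]
    (c : ℝ) (α : V →ₗ[ℝ] V →ₗ[ℝ] N) (X Y Z W : V) : ℝ :=
  c * (⟪Y, Z⟫ * ⟪X, W⟫ - ⟪X, Z⟫ * ⟪Y, W⟫) + ⟪α X W, α Y Z⟫ - ⟪α X Z, α Y W⟫

/-- the final computation in the proof of Theorem 1: `A_δ = I` on all
of `V`. -/
theorem stmt_19
    (V N : Type*) [NormedAddCommGroup V] [InnerProductSpace ℝ V] [FiniteDimensional ℝ V]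
    [NormedAddCommGroup N] [InnerProductSpace ℝ N]
    (n : ℕ) (hV : Module.finrank ℝ V = 2 * n)
    (J : V →ₗ[ℝ] V) (hJ2 : ∀ X : V, J (J X) = -X)
    (hJorth : ∀ X Y : V, ⟪J X, J Y⟫ = ⟪X, Y⟫)
    (α : V →ₗ[ℝ] V →ₗ[ℝ] N) (hαsymm : ∀ X Y : V, α X Y = α Y X)
    (δ : N) (hδ : ‖δ‖ = 1)
    (L : Submodule ℝ V) (hL : L ≠ ⊥) (hLJ : ∀ Z ∈ L, J Z ∈ L)
    (hαL : ∀ X : V, ∀ Z ∈ L, α X Z = ⟪X, Z⟫ • δ)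
    (hKaehler : ∀ X Y Z W : V,
      gaussR (-1) α X Y (J Z) (J W) = gaussR (-1) α X Y Z W) :
    (∀ X ∈ Lᗮ, ‖X‖ = 1 → ⟪α X X, δ⟫ = 1) ∧
      ∀ X Y : V, ⟪α X Y, δ⟫ = ⟪X, Y⟫ := by
  have hδδ : ⟪δ, δ⟫ = 1 := by
    rw [real_inner_self_eq_norm_sq, hδ]; norm_num
  have hskew : ∀ X Y : V, ⟪X, J Y⟫ = -⟪J X, Y⟫ := by
    intro X Y
    have h := hJorth (J X) Y
    rw [hJ2, inner_neg_left] at h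
    linarith
  obtain ⟨z, hzL, hz0⟩ := Submodule.exists_mem_ne_zero_of_ne_bot hL
  set Z := (‖z‖⁻¹ : ℝ) • z with hZdef
  have hZL : Z ∈ L := L.smul_mem _ hzL
  have hZ : ‖Z‖ = 1 := by
    rw [hZdef, norm_smul, norm_inv, norm_norm,
      inv_mul_cancel₀ (norm_ne_zero_iff.mpr hz0)]
  have hZZ : ⟪Z, Z⟫ = 1 := by rw [real_inner_self_eq_norm_sq, hZ]; norm_num
  have part1 : ∀ X ∈ Lᗮ, ‖X‖ = 1 → ⟪α X X, δ⟫ = 1 := by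
    intro X hX hX1
    have hZX : ⟪Z, X⟫ = 0 := Submodule.inner_right_of_mem_orthogonal hZL hX
    have hXZ : ⟪X, Z⟫ = 0 := by rw [real_inner_comm]; exact hZX
    have hXX : ⟪X, X⟫ = 1 := by rw [real_inner_self_eq_norm_sq, hX1]; norm_num
    have hZJZ : ⟪Z, J Z⟫ = 0 := by
      have h := hskew Z Z
      have hc := real_inner_comm Z (J Z)
      linarith
    have hXJX : ⟪X, J X⟫ = 0 := by
      have h := hskew X X
      have hc := real_inner_comm X (J X)
      linarith
    have hJZX : ⟪J Z, X⟫ = 0 :=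
      Submodule.inner_right_of_mem_orthogonal (hLJ Z hZL) hX
    have hXJZ : ⟪X, J Z⟫ = 0 := by rw [real_inner_comm]; exact hJZX
    have hZJX : ⟪Z, J X⟫ = 0 := by rw [hskew, hJZX, neg_zero]
    have hJXZ : ⟪J X, Z⟫ = 0 := by rw [real_inner_comm]; exact hZJX
    have e1 : α X Z = 0 := by rw [hαL X Z hZL, hXZ, zero_smul]
    have e2 : α Z X = 0 := by rw [hαsymm]; exact e1
    have e3 : α Z Z = δ := by rw [hαL Z Z hZL, hZZ, one_smul]
    have e4 : α Z (J Z) = 0 := by rw [hαL Z (J Z) (hLJ Z hZL), hZJZ, zero_smul]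
    have e5 : α X (J Z) = 0 := by rw [hαL X (J Z) (hLJ Z hZL), hXJZ, zero_smul]
    have e6 : α Z (J X) = 0 := by rw [hαsymm, hαL (J X) Z hZL, hJXZ, zero_smul]
    have hKey := hKaehler X Z Z X
    simp only [gaussR, e1, e2, e3, e4, e5, e6, hXZ, hZX, hZZ, hXX, hZJZ, hXJX,
      hXJZ, hZJX, inner_zero_left, inner_zero_right] at hKey
    linarith
  have part2a : ∀ X ∈ Lᗮ, ⟪α X X, δ⟫ = ⟪X, X⟫ := by
    intro X hX
    rcases eq_or_ne X 0 with rfl | hX0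
    · simp
    · have hc : ‖X‖ ≠ 0 := norm_ne_zero_iff.mpr hX0
      set u := (‖X‖⁻¹ : ℝ) • X with hu
      have huL : u ∈ Lᗮ := Lᗮ.smul_mem _ hX
      have hu1 : ‖u‖ = 1 := by
        rw [hu, norm_smul, norm_inv, norm_norm, inv_mul_cancel₀ hc]
      have h := part1 u huL hu1
      rw [hu] at h
      simp only [map_smul, LinearMap.smul_apply, real_inner_smul_left,
        smul_smul] at h
      have h2 : ⟪α X X, δ⟫ = ‖X‖ * ‖X‖ := by
        field_simp at h
        linarith
      rw [h2, real_inner_self_eq_norm_mul_norm]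
  have part2b : ∀ X ∈ Lᗮ, ∀ Y ∈ Lᗮ, ⟪α X Y, δ⟫ = ⟪X, Y⟫ := by
    intro X hX Y hY
    have h := part2a (X + Y) (Lᗮ.add_mem hX hY)
    simp only [map_add, LinearMap.add_apply, inner_add_left, inner_add_right] at h
    have hXY := part2a X hX
    have hYY := part2a Y hY
    have hs : α Y X = α X Y := hαsymm Y X
    rw [hs] at h
    have hc := real_inner_comm Y X
    linarith
  refine ⟨part1, ?_⟩
  intro X Y
  obtain ⟨p, hp, q, hq, hXpq⟩ := L.exists_add_mem_mem_orthogonal X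
  obtain ⟨r, hr, s, hs, hYrs⟩ := L.exists_add_mem_mem_orthogonal Y
  have h1 : ⟪α p r, δ⟫ = ⟪p, r⟫ := by
    rw [hαL p r hr, real_inner_smul_left, hδδ, mul_one]
  have h2 : ⟪α p s, δ⟫ = ⟪p, s⟫ := by
    rw [hαsymm, hαL s p hp, real_inner_smul_left, hδδ, mul_one, real_inner_comm]
  have h3 : ⟪α q r, δ⟫ = ⟪q, r⟫ := by
    rw [hαL q r hr, real_inner_smul_left, hδδ, mul_one]
  have h4 : ⟪α q s, δ⟫ = ⟪q, s⟫ := part2b q hq s hs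
  rw [hXpq, hYrs]
  simp only [map_add, LinearMap.add_apply, inner_add_left, inner_add_right]
  linarith
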